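/- arXiv:1301.4047 — 7 statements merged into one kernel-verified Lean document; each statement's English description precedes it below -/
import Mathlib

section
/- Let n ≥ 1 be even. The number of triples (i,j,s) with 1 ≤ i < j ≤ n, 1 ≤ s ≤ n and n + 2(s - i - j) + 1 = 1 equals n(3n-2)/8. -/
open Finset

private lemma gaussQ (N : ℕ) : ∑ i ∈ Finset.Icc (1:ℤ) N, (i:ℚ) = N*(N+1)/2 := by
  induction N with
  | zero => simp
  | succ k ih =>
    have h : Finset.Icc (1:ℤ) ((k:ℕ)+1 : ℕ) = insert ((k:ℤ)+1) (Finset.Icc (1:ℤ) k) := by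
      ext x; simp only [Finset.mem_Icc, Finset.mem_insert]; push_cast; omega
    rw [h, Finset.sum_insert (by simp)]
    rw [ih]; push_cast; ring

private lemma pairCard (m : ℕ) (hm1 : 1 ≤ m) :
    (((((Finset.Icc (1:ℤ) (2*(m:ℤ))) ×ˢ (Finset.Icc (1:ℤ) (2*(m:ℤ)))).filter
      (fun p => p.1 < p.2 ∧ (m:ℤ)+1 ≤ p.1 + p.2 ∧ p.1 + p.2 ≤ 3*(m:ℤ))).card : ℚ))
      = (m*(3*m-1))/2 := by
  set I : Finset ℤ := Finset.Icc (1:ℤ) (2*(m:ℤ)) with hI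
  set A : Finset (ℤ × ℤ) := (I ×ˢ I).filter
    (fun p => p.1 < p.2 ∧ (m:ℤ)+1 ≤ p.1 + p.2 ∧ p.1 + p.2 ≤ 3*(m:ℤ)) with hA
  set A' : Finset (ℤ × ℤ) := (I ×ˢ I).filter
    (fun p => p.2 < p.1 ∧ (m:ℤ)+1 ≤ p.1 + p.2 ∧ p.1 + p.2 ≤ 3*(m:ℤ)) with hA'
  set D : Finset (ℤ × ℤ) := (I ×ˢ I).filter
    (fun p => p.1 = p.2 ∧ (m:ℤ)+1 ≤ p.1 + p.2 ∧ p.1 + p.2 ≤ 3*(m:ℤ)) with hD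
  set T : Finset (ℤ × ℤ) := (I ×ˢ I).filter
    (fun p => (m:ℤ)+1 ≤ p.1 + p.2 ∧ p.1 + p.2 ≤ 3*(m:ℤ)) with hT
  -- split T into A, A', D
  have e1 : T.filter (fun p => p.1 < p.2) = A := by
    ext p; simp only [hT, hA, Finset.mem_filter, Finset.filter_filter]; tauto
  have e2 : (T.filter (fun p => ¬ p.1 < p.2)).filter (fun p => p.2 < p.1) = A' := by
    ext p
    simp only [hT, hA', Finset.mem_filter, Finset.mem_product, Finset.mem_Icc, hI, not_lt]
    constructor
    · rintro ⟨⟨⟨h1, h2, h3⟩, h4⟩, h5⟩; exact ⟨h1, h5, h2, h3⟩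
    · rintro ⟨h1, h5, h2, h3⟩; exact ⟨⟨⟨h1, h2, h3⟩, by omega⟩, h5⟩
  have e3 : (T.filter (fun p => ¬ p.1 < p.2)).filter (fun p => ¬ p.2 < p.1) = D := by
    ext p
    simp only [hT, hD, Finset.mem_filter, Finset.mem_product, Finset.mem_Icc, hI, not_lt]
    constructor
    · rintro ⟨⟨⟨h1, h2, h3⟩, h4⟩, h5⟩; exact ⟨h1, by omega, h2, h3⟩
    · rintro ⟨h1, h5, h2, h3⟩; exact ⟨⟨⟨h1, h2, h3⟩, by omega⟩, by omega⟩
  have hTsplit : T.card = A.card + A'.card + D.card := by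
    have u1 := Finset.card_filter_add_card_filter_not
      (s := T) (p := fun p => p.1 < p.2)
    have u2 := Finset.card_filter_add_card_filter_not
      (s := T.filter (fun p => ¬ p.1 < p.2)) (p := fun p => p.2 < p.1)
    rw [e1] at u1; rw [e2, e3] at u2; omega
  -- A' ↔ A by swap
  have hAA' : A'.card = A.card := by
    refine Finset.card_nbij' Prod.swap Prod.swap ?_ ?_ ?_ ?_
    · intro a ha
      obtain ⟨a1, a2⟩ := a
      simp only [hA, hA', hI, Finset.mem_coe, Finset.mem_filter, Finset.mem_product, Finset.mem_Icc,
        Prod.swap_prod_mk] at ha ⊢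
      omega
    · intro a ha
      obtain ⟨a1, a2⟩ := a
      simp only [hA, hA', hI, Finset.mem_coe, Finset.mem_filter, Finset.mem_product, Finset.mem_Icc,
        Prod.swap_prod_mk] at ha ⊢
      omega
    · intro a _; rfl
    · intro a _; rfl
  -- D has m elements
  have hDm : D.card = m := by
    have hd : D.card = (Finset.Icc ((m:ℤ)/2 + 1) ((m:ℤ) + (m:ℤ)/2)).card := by
      refine Finset.card_nbij' (fun p => p.1) (fun i => (i, i)) ?_ ?_ ?_ ?_
      · intro a ha
        obtain ⟨a1, a2⟩ := a
        simp only [hD, hI, Finset.mem_coe, Finset.mem_filter, Finset.mem_product, Finset.mem_Icc] at ha ⊢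
        omega
      · intro a ha
        simp only [hD, hI, Finset.mem_coe, Finset.mem_filter, Finset.mem_product, Finset.mem_Icc,
          true_and, and_true] at ha ⊢
        omega
      · intro a ha
        obtain ⟨a1, a2⟩ := a
        simp only [hD, Finset.mem_coe, Finset.mem_filter] at ha
        simp only [Prod.mk.injEq, true_and]
        exact ha.2.1
      · intro a _; rfl
    rw [hd, Int.card_Icc]; omega
  -- T.card as a sum over slices
  set c : ℤ → ℕ := fun i => ((I.filter (fun j => (m:ℤ)+1 ≤ i + j ∧ i + j ≤ 3*(m:ℤ))).card)
    with hcdef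
  have hTsum : T.card = ∑ i ∈ I, c i := by
    rw [hT, Finset.card_filter, Finset.sum_product]
    exact Finset.sum_congr rfl fun i _ => (Finset.card_filter _ _).symm
  -- split the index set
  have hdisj : Disjoint (Finset.Icc (1:ℤ) m) (Finset.Ioc (m:ℤ) (2*m)) := by
    rw [Finset.disjoint_left]
    intro a h1 h2
    simp only [Finset.mem_Icc, Finset.mem_Ioc] at h1 h2
    omega
  have hsplit : I = Finset.Icc (1:ℤ) m ∪ Finset.Ioc (m:ℤ) (2*m) := by
    ext x
    simp only [hI, Finset.mem_Icc, Finset.mem_Ioc, Finset.mem_union]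
    omega
  have hTsum2 : T.card = ∑ i ∈ Finset.Icc (1:ℤ) m, c i + ∑ i ∈ Finset.Ioc (m:ℤ) (2*m), c i := by
    rw [hTsum, ← Finset.sum_union hdisj]
    exact Finset.sum_congr hsplit fun _ _ => rfl
  -- slice cardinalities
  have hc1 : ∀ i ∈ Finset.Icc (1:ℤ) m, c i = ((m:ℤ) + i).toNat := by
    intro i hi
    simp only [Finset.mem_Icc] at hi
    have hfe : I.filter (fun j => (m:ℤ)+1 ≤ i + j ∧ i + j ≤ 3*(m:ℤ))
        = Finset.Icc ((m:ℤ)+1-i) (2*(m:ℤ)) := by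
      ext j; simp only [hI, Finset.mem_filter, Finset.mem_Icc]; omega
    rw [hcdef]; simp only []
    rw [hfe, Int.card_Icc]
    omega
  have hc2 : ∀ i ∈ Finset.Ioc (m:ℤ) (2*m), c i = (3*(m:ℤ) - i).toNat := by
    intro i hi
    simp only [Finset.mem_Ioc] at hi
    have hfe : I.filter (fun j => (m:ℤ)+1 ≤ i + j ∧ i + j ≤ 3*(m:ℤ))
        = Finset.Icc (1:ℤ) (3*(m:ℤ) - i) := by
      ext j; simp only [hI, Finset.mem_filter, Finset.mem_Icc]; omega
    rw [hcdef]; simp only []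
    rw [hfe, Int.card_Icc]
    omega
  -- cast to ℚ
  have hT1 : (T.card : ℚ)
      = ∑ i ∈ Finset.Icc (1:ℤ) m, ((m:ℚ) + (i:ℚ))
        + ∑ i ∈ Finset.Ioc (m:ℤ) (2*m), (3*(m:ℚ) - (i:ℚ)) := by
    rw [hTsum2, Finset.sum_congr rfl hc1, Finset.sum_congr rfl hc2]
    push_cast
    congr 1
    · refine Finset.sum_congr rfl fun i hi => ?_
      simp only [Finset.mem_Icc] at hi
      rw [← Int.cast_natCast (R := ℚ), Int.toNat_of_nonneg (by omega)]
      push_cast; ring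
    · refine Finset.sum_congr rfl fun i hi => ?_
      simp only [Finset.mem_Ioc] at hi
      rw [← Int.cast_natCast (R := ℚ), Int.toNat_of_nonneg (by omega)]
      push_cast; ring
  have hcard1 : (Finset.Icc (1:ℤ) m).card = m := by rw [Int.card_Icc]; omega
  have hcard2 : (Finset.Ioc (m:ℤ) (2*m)).card = m := by rw [Int.card_Ioc]; omega
  have hIoc : ∑ i ∈ Finset.Ioc (m:ℤ) (2*m), (i:ℚ)
      = (2*(m:ℚ))*((2*(m:ℚ))+1)/2 - (m:ℚ)*((m:ℚ)+1)/2 := by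
    have h2 : Finset.Icc (1:ℤ) ((2*m : ℕ)) = Finset.Icc (1:ℤ) m ∪ Finset.Ioc (m:ℤ) (2*m) := by
      ext x
      simp only [Finset.mem_Icc, Finset.mem_Ioc, Finset.mem_union]
      push_cast
      omega
    have hg := gaussQ (2*m)
    rw [h2, Finset.sum_union hdisj, gaussQ m] at hg
    push_cast at hg ⊢
    linarith
  have hTval : (T.card : ℚ) = 3*(m:ℚ)^2 := by
    rw [hT1, Finset.sum_add_distrib, Finset.sum_sub_distrib, Finset.sum_const, Finset.sum_const,
      hcard1, hcard2, gaussQ m, hIoc]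
    push_cast
    ring
  -- conclude
  have hfin : (T.card : ℚ) = 2*(A.card:ℚ) + m := by
    rw [hTsplit, hAA', hDm]; push_cast; ring
  rw [hfin] at hTval
  field_simp
  linarith

/-- For `n` even, the number of triples `(i,j,s)`, `1 ≤ i < j ≤ n`, `1 ≤ s ≤ n`, with
`n + 2(s - i - j) + 1 = 1` equals `n(3n-2)/8`. -/
theorem stmt4 (n : ℕ) (hn : 1 ≤ n) (hev : Even n) :
    ((((Finset.Icc (1:ℤ) n) ×ˢ (Finset.Icc (1:ℤ) n) ×ˢ (Finset.Icc (1:ℤ) n)).filter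
        (fun t => t.1 < t.2.1 ∧ (n : ℤ) + 2 * (t.2.2 - t.1 - t.2.1) + 1 = 1)).card : ℚ)
      = (n * (3 * n - 2)) / 8 := by
  obtain ⟨m, hm⟩ := hev
  have hm1 : 1 ≤ m := by omega
  have hnm : (n:ℤ) = 2*(m:ℤ) := by push_cast [hm]; ring
  have hSA : (((Finset.Icc (1:ℤ) n) ×ˢ (Finset.Icc (1:ℤ) n) ×ˢ (Finset.Icc (1:ℤ) n)).filter
        (fun t => t.1 < t.2.1 ∧ (n : ℤ) + 2 * (t.2.2 - t.1 - t.2.1) + 1 = 1)).card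
      = ((((Finset.Icc (1:ℤ) (2*(m:ℤ))) ×ˢ (Finset.Icc (1:ℤ) (2*(m:ℤ)))).filter
      (fun p => p.1 < p.2 ∧ (m:ℤ)+1 ≤ p.1 + p.2 ∧ p.1 + p.2 ≤ 3*(m:ℤ))).card) := by
    refine Finset.card_nbij' (fun t => (t.1, t.2.1)) (fun p => (p.1, p.2, p.1 + p.2 - (m:ℤ)))
      ?_ ?_ ?_ ?_
    · intro a ha
      simp only [Finset.mem_coe, Finset.mem_filter, Finset.mem_product, Finset.mem_Icc] at ha ⊢
      omega
    · intro a ha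
      simp only [Finset.mem_coe, Finset.mem_filter, Finset.mem_product, Finset.mem_Icc] at ha ⊢
      omega
    · intro a ha
      obtain ⟨a1, a2, a3⟩ := a
      simp only [Finset.mem_coe, Finset.mem_filter, Finset.mem_product, Finset.mem_Icc] at ha
      simp only [Prod.mk.injEq, true_and]
      omega
    · intro a _; rfl
  rw [hSA, pairCard m hm1]
  have : (n:ℚ) = 2*(m:ℚ) := by push_cast [hm]; ring
  rw [this]
  ring
end

section
/- Let n ≥ 1 be odd. The number of triples (i,j,s) with 1 ≤ i < j ≤ n, 1 ≤ s ≤ n and n + 2(s - i - j) + 1 = 0 equals (3n² - 4n + 1)/8 + ⌊(n+1)/4⌋. -/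
open Finset

private noncomputable def Aux (m : ℕ) : Finset (ℤ × ℤ) :=
  ((Finset.Icc (1:ℤ) (2*m+1)) ×ˢ (Finset.Icc (1:ℤ) (2*m+1))).filter
    (fun p => p.1 < p.2 ∧ (m:ℤ)+2 ≤ p.1+p.2 ∧ p.1+p.2 ≤ 3*m+2)

private lemma mem_Aux {m : ℕ} {p : ℤ × ℤ} : p ∈ Aux m ↔
    1 ≤ p.1 ∧ p.1 < p.2 ∧ p.2 ≤ 2*m+1 ∧ (m:ℤ)+2 ≤ p.1+p.2 ∧ p.1+p.2 ≤ 3*m+2 := by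
  simp only [Aux, mem_filter, mem_product, mem_Icc]
  constructor
  · rintro ⟨⟨⟨h1,h2⟩,h3,h4⟩,h5,h6,h7⟩; exact ⟨h1,h5,h4,h6,h7⟩
  · rintro ⟨h1,h2,h3,h4,h5⟩; exact ⟨⟨⟨h1, by omega⟩, by omega, h3⟩, h2, h4, h5⟩

private def Q0 (m : ℕ) (p : ℤ × ℤ) : Prop :=
  2 ≤ p.1 ∧ p.2 ≤ 2*(m:ℤ)+2 ∧ (m:ℤ)+4 ≤ p.1+p.2 ∧ p.1+p.2 ≤ 3*m+4

private instance (m : ℕ) : DecidablePred (Q0 m) := fun p => by unfold Q0; infer_instance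

private lemma aux_step (m : ℕ) :
    (Aux (m+1)).card = (Aux m).card + ((m+2) + (m+1) + m/2 + m/2) := by
  -- the shifted copy of Aux m
  have h0 : ((Aux (m+1)).filter (Q0 m)).card = (Aux m).card := by
    apply Finset.card_nbij' (fun p => (p.1 - 1, p.2 - 1)) (fun p => (p.1 + 1, p.2 + 1))
    · intro p hp
      simp only [mem_coe, mem_filter, mem_Aux, Q0] at hp ⊢
      push_cast at hp ⊢; omega
    · intro p hp
      simp only [mem_coe, mem_filter, mem_Aux, Q0] at hp ⊢
      push_cast at hp ⊢; omega
    · intro p _; simp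
    · intro p _; simp
  have e0 := Finset.card_filter_add_card_filter_not (s := Aux (m+1)) (Q0 m)
  -- class 1 : p.1 = 1
  have e1 := Finset.card_filter_add_card_filter_not
    (s := (Aux (m+1)).filter (fun p => ¬ Q0 m p)) (fun p : ℤ × ℤ => p.1 = 1)
  have h1 : (((Aux (m+1)).filter (fun p => ¬ Q0 m p)).filter
      (fun p : ℤ × ℤ => p.1 = 1)).card = (Finset.Icc ((m:ℤ)+2) (2*m+3)).card := by
    apply Finset.card_nbij' (fun p => p.2) (fun j => (1, j))
    · intro p hp
      simp only [mem_coe, mem_filter] at hp ⊢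
      simp only [mem_coe, mem_filter, mem_Aux, Q0, mem_Icc] at hp ⊢
      push_cast at hp ⊢; omega
    · intro j hj
      simp only [mem_coe, mem_filter] at hj ⊢
      simp only [mem_coe, mem_filter, mem_Aux, Q0, mem_Icc] at hj ⊢
      push_cast at hj ⊢
      try simp only [true_and, and_true, false_and, not_false_eq_true] at hj ⊢
      omega
    · intro p hp
      simp only [mem_coe, mem_filter] at hp
      exact Prod.ext hp.2.symm rfl
    · intro j _; rfl
  -- class 2 : p.1 ≠ 1, p.2 = 2m+3
  have e2 := Finset.card_filter_add_card_filter_not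
    (s := (((Aux (m+1)).filter (fun p => ¬ Q0 m p)).filter (fun p : ℤ × ℤ => ¬ p.1 = 1)))
    (fun p : ℤ × ℤ => p.2 = 2*(m:ℤ)+3)
  have h2 : ((((Aux (m+1)).filter (fun p => ¬ Q0 m p)).filter
      (fun p : ℤ × ℤ => ¬ p.1 = 1)).filter (fun p : ℤ × ℤ => p.2 = 2*(m:ℤ)+3)).card
      = (Finset.Icc (2:ℤ) ((m:ℤ)+2)).card := by
    apply Finset.card_nbij' (fun p => p.1) (fun i => (i, 2*(m:ℤ)+3))
    · intro p hp
      simp only [mem_coe, mem_filter] at hp ⊢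
      simp only [mem_coe, mem_filter, mem_Aux, Q0, mem_Icc] at hp ⊢
      push_cast at hp ⊢; omega
    · intro i hi
      simp only [mem_coe, mem_filter] at hi ⊢
      simp only [mem_coe, mem_filter, mem_Aux, Q0, mem_Icc] at hi ⊢
      push_cast at hi ⊢
      try simp only [true_and, and_true, false_and, not_false_eq_true] at hi ⊢
      omega
    · intro p hp
      simp only [mem_coe, mem_filter] at hp
      exact Prod.ext rfl hp.2.symm
    · intro i _; rfl
  -- class 3 : p.1 ≠ 1, p.2 ≠ 2m+3, p.1+p.2 = m+3
  have e3 := Finset.card_filter_add_card_filter_not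
    (s := ((((Aux (m+1)).filter (fun p => ¬ Q0 m p)).filter (fun p : ℤ × ℤ => ¬ p.1 = 1)).filter
      (fun p : ℤ × ℤ => ¬ p.2 = 2*(m:ℤ)+3)))
    (fun p : ℤ × ℤ => p.1 + p.2 = (m:ℤ)+3)
  have h3 : (((((Aux (m+1)).filter (fun p => ¬ Q0 m p)).filter
      (fun p : ℤ × ℤ => ¬ p.1 = 1)).filter (fun p : ℤ × ℤ => ¬ p.2 = 2*(m:ℤ)+3)).filter
      (fun p : ℤ × ℤ => p.1 + p.2 = (m:ℤ)+3)).card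
      = (Finset.Icc (2:ℤ) (((m:ℤ)+2)/2)).card := by
    apply Finset.card_nbij' (fun p => p.1) (fun i => (i, (m:ℤ)+3-i))
    · intro p hp
      simp only [mem_coe, mem_filter] at hp ⊢
      simp only [mem_coe, mem_filter, mem_Aux, Q0, mem_Icc] at hp ⊢
      push_cast at hp ⊢; omega
    · intro i hi
      simp only [mem_coe, mem_filter] at hi ⊢
      simp only [mem_coe, mem_filter, mem_Aux, Q0, mem_Icc] at hi ⊢
      push_cast at hi ⊢
      try simp only [true_and, and_true, false_and, not_false_eq_true] at hi ⊢
      omega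
    · intro p hp
      simp only [mem_coe, mem_filter] at hp
      have h := hp.2
      exact Prod.ext rfl (by dsimp only; omega)
    · intro i _; rfl
  -- class 4 : the rest, p.1+p.2 = 3m+5
  have h4 : (((((Aux (m+1)).filter (fun p => ¬ Q0 m p)).filter
      (fun p : ℤ × ℤ => ¬ p.1 = 1)).filter (fun p : ℤ × ℤ => ¬ p.2 = 2*(m:ℤ)+3)).filter
      (fun p : ℤ × ℤ => ¬ p.1 + p.2 = (m:ℤ)+3)).card
      = (Finset.Icc ((m:ℤ)+3) ((3*(m:ℤ)+4)/2)).card := by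
    apply Finset.card_nbij' (fun p => p.1) (fun i => (i, 3*(m:ℤ)+5-i))
    · intro p hp
      simp only [mem_coe, mem_filter] at hp ⊢
      simp only [mem_coe, mem_filter, mem_Aux, Q0, mem_Icc] at hp ⊢
      push_cast at hp ⊢; omega
    · intro i hi
      simp only [mem_coe, mem_filter] at hi ⊢
      simp only [mem_coe, mem_filter, mem_Aux, Q0, mem_Icc] at hi ⊢
      push_cast at hi ⊢
      try simp only [true_and, and_true, false_and, not_false_eq_true] at hi ⊢
      omega
    · intro p hp
      rcases p with ⟨a, b⟩
      simp only [mem_coe, mem_filter] at hp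
      simp only [mem_coe, mem_filter, mem_Aux, Q0] at hp
      push_cast at hp
      exact Prod.ext rfl (show 3*(m:ℤ)+5-a = b by omega)
    · intro i _; rfl
  beta_reduce at e0 e1 e2 e3
  rw [h1] at e1
  rw [h2] at e2
  rw [h3] at e3
  rw [h0] at e0
  rw [h4] at e3
  rw [Int.card_Icc] at e1 e2 e3
  rw [Int.card_Icc] at e3
  rw [← e0, ← e1, ← e2, ← e3]
  rcases Nat.even_or_odd m with ⟨a, ha⟩ | ⟨a, ha⟩ <;> subst ha <;> push_cast <;> omega

private def TT : ℕ → ℕ := fun m =>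
  6*(m/2)*(m/2) + 2*(m/2) + (if m % 2 = 1 then 6*(m/2) + 3 else 0)

private lemma TT_step (m : ℕ) : TT (m+1) = TT m + ((m+2) + (m+1) + m/2 + m/2) := by
  rcases Nat.even_or_odd m with ⟨a, rfl⟩ | ⟨a, rfl⟩
  · have h1 : (a+a)/2 = a := by omega
    have h2 : (a+a+1)/2 = a := by omega
    have h3 : (a+a)%2 = 0 := by omega
    have h4 : (a+a+1)%2 = 1 := by omega
    simp only [TT, h1, h2, h3, h4]
    norm_num
    ring
  · have h1 : (2*a+1)/2 = a := by omega
    have h2 : (2*a+1+1)/2 = a+1 := by omega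
    have h3 : (2*a+1)%2 = 1 := by omega
    have h4 : (2*a+1+1)%2 = 0 := by omega
    simp only [TT, h1, h2, h3, h4]
    norm_num
    ring

private lemma aux_zero : (Aux 0).card = 0 := by
  rw [Finset.card_eq_zero]
  ext p
  simp only [mem_Aux, Finset.notMem_empty, iff_false]
  push_cast
  omega

private lemma aux_card (m : ℕ) : (Aux m).card = TT m := by
  induction m with
  | zero => rw [aux_zero]; rfl
  | succ k ih => rw [aux_step, ih, TT_step]


/-- For `n` odd, the number of triples `(i,j,s)`, `1 ≤ i < j ≤ n`, `1 ≤ s ≤ n`, with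
`n + 2(s - i - j) + 1 = 0` equals `(3n² - 4n + 1)/8 + ⌊(n+1)/4⌋`. -/
theorem stmt5 (n : ℕ) (hn : 1 ≤ n) (hodd : Odd n) :
    ((((Finset.Icc (1:ℤ) n) ×ˢ (Finset.Icc (1:ℤ) n) ×ˢ (Finset.Icc (1:ℤ) n)).filter
        (fun t => t.1 < t.2.1 ∧ (n : ℤ) + 2 * (t.2.2 - t.1 - t.2.1) + 1 = 0)).card : ℚ)
      = (3 * n ^ 2 - 4 * n + 1) / 8 + ((n + 1) / 4 : ℕ) := by
  obtain ⟨m, rfl⟩ := hodd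
  have hcard : (((Finset.Icc (1:ℤ) (2*m+1:ℕ)) ×ˢ (Finset.Icc (1:ℤ) (2*m+1:ℕ)) ×ˢ
      (Finset.Icc (1:ℤ) (2*m+1:ℕ))).filter
        (fun t => t.1 < t.2.1 ∧ ((2*m+1:ℕ) : ℤ) + 2 * (t.2.2 - t.1 - t.2.1) + 1 = 0)).card
      = (Aux m).card := by
    apply Finset.card_nbij' (fun t => (t.1, t.2.1))
      (fun p => (p.1, p.2, p.1 + p.2 - ((m:ℤ)+1)))
    · intro t ht
      simp only [mem_coe, mem_filter, mem_product, mem_Icc, mem_Aux] at ht ⊢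
      push_cast at ht ⊢
      omega
    · intro p hp
      simp only [mem_coe, mem_filter, mem_product, mem_Icc, mem_Aux] at hp ⊢
      push_cast at hp ⊢
      omega
    · intro t ht
      simp only [mem_coe, mem_filter, mem_product, mem_Icc] at ht
      rcases t with ⟨a, b, c⟩
      have : ((2*m+1:ℕ) : ℤ) + 2 * (c - a - b) + 1 = 0 := ht.2.2
      push_cast at this
      refine Prod.ext rfl (Prod.ext rfl ?_)
      show a + b - ((m:ℤ)+1) = c
      omega
    · intro p _
      exact Prod.mk.eta
  rw [hcard, aux_card]
  rcases Nat.even_or_odd m with ⟨a, rfl⟩ | ⟨a, rfl⟩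
  · have h1 : (a+a)/2 = a := by omega
    have h3 : (a+a)%2 = 0 := by omega
    have h5 : (2*(a+a)+1+1)/4 = a := by omega
    simp only [TT, h1, h3, h5]
    norm_num
    ring
  · have h1 : (2*a+1)/2 = a := by omega
    have h3 : (2*a+1)%2 = 1 := by omega
    have h5 : (2*(2*a+1)+1+1)/4 = a+1 := by omega
    simp only [TT, h1, h3, h5]
    norm_num
    ring
end

section
/- Let n, m ≥ 1 with n odd and n < 2m + 1. The number of triples (i,j,s) with 1 ≤ i ≤ n, 1 ≤ j ≤ m, 1 ≤ s ≤ m such that (-m + 2s - 1) - (-n + 2i - 1) - (-m + 2j - 1) = 0 equals (4nm - n² + 1)/4. -/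
open Finset

lemma symm_sum (m : ℤ) (a : ℕ) :
    ∑ i ∈ Finset.Icc (-(a:ℤ)) a, (m - |i|) = (2*a+1)*m - a*(a+1) := by
  induction a with
  | zero => simp
  | succ b ih =>
    have h1 : Finset.Icc (-((b:ℕ)+1:ℤ)) ((b:ℕ)+1:ℤ)
        = insert (-((b:ℤ)+1)) (insert ((b:ℤ)+1) (Finset.Icc (-(b:ℤ)) (b:ℤ))) := by
      ext x
      simp only [Finset.mem_Icc, Finset.mem_insert]
      push_cast
      omega
    push_cast only [Nat.cast_succ] at h1 ⊢
    rw [h1, Finset.sum_insert (by simp only [Finset.mem_insert, Finset.mem_Icc]; omega),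
        Finset.sum_insert (by simp only [Finset.mem_Icc]; omega), ih]
    have h2 : |(-((b:ℤ)+1))| = (b:ℤ)+1 := by
      rw [abs_neg]; exact abs_of_nonneg (by positivity)
    have h3 : |((b:ℤ)+1)| = (b:ℤ)+1 := abs_of_nonneg (by positivity)
    rw [h2, h3]; ring

/-- For `n` odd, `n < 2m+1`: the number of triples `(i,j,s)` with `1 ≤ i ≤ n`,
`1 ≤ j,s ≤ m` and `(-m+2s-1) - (-n+2i-1) - (-m+2j-1) = 0` equals `(4nm - n² + 1)/4`. -/
theorem stmt6 (n m : ℕ) (hn : 1 ≤ n) (hm : 1 ≤ m) (hodd : Odd n) (h : n < 2 * m + 1) :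
    ((((Finset.Icc (1:ℤ) n) ×ˢ (Finset.Icc (1:ℤ) m) ×ˢ (Finset.Icc (1:ℤ) m)).filter
        (fun t => (-(m : ℤ) + 2 * t.2.2 - 1) - (-(n : ℤ) + 2 * t.1 - 1)
            - (-(m : ℤ) + 2 * t.2.1 - 1) = 0)).card : ℚ)
      = (4 * n * m - n ^ 2 + 1) / 4 := by
  obtain ⟨k0, hk⟩ := hodd
  set k : ℤ := (k0 : ℤ) + 1 with hkdef
  have hn' : (n : ℤ) = 2*k - 1 := by rw [hkdef]; push_cast [hk]; ring
  have hkm : k ≤ (m:ℤ) := by rw [hkdef]; omega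
  have hk1 : (1:ℤ) ≤ k := by rw [hkdef]; omega
  have hmain : ((((Finset.Icc (1:ℤ) n) ×ˢ (Finset.Icc (1:ℤ) m) ×ˢ (Finset.Icc (1:ℤ) m)).filter
        (fun t => (-(m : ℤ) + 2 * t.2.2 - 1) - (-(n : ℤ) + 2 * t.1 - 1)
            - (-(m : ℤ) + 2 * t.2.1 - 1) = 0)).card : ℤ)
      = (n:ℤ)*m - k*(k-1) := by
    rw [Finset.card_filter]
    push_cast
    rw [Finset.sum_product]
    have step1 : ∀ i ∈ Finset.Icc (1:ℤ) (n:ℤ),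
        (∑ p ∈ (Finset.Icc (1:ℤ) m) ×ˢ (Finset.Icc (1:ℤ) m),
          if (-(m:ℤ) + 2 * p.2 - 1) - (-(n:ℤ) + 2 * i - 1) - (-(m:ℤ) + 2 * p.1 - 1) = 0
          then (1:ℤ) else 0)
        = (m:ℤ) - |i - k| := by
      intro i hi
      rw [Finset.sum_product]
      have inner : ∀ j ∈ Finset.Icc (1:ℤ) (m:ℤ),
          (∑ s ∈ Finset.Icc (1:ℤ) (m:ℤ),
            if (-(m:ℤ) + 2 * s - 1) - (-(n:ℤ) + 2 * i - 1) - (-(m:ℤ) + 2 * j - 1) = 0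
            then (1:ℤ) else 0)
          = if i + j - k ∈ Finset.Icc (1:ℤ) (m:ℤ) then 1 else 0 := by
        intro j _
        rw [Finset.sum_congr rfl (fun s _ => ?_),
          Finset.sum_ite_eq' (Finset.Icc (1:ℤ) (m:ℤ)) (i+j-k) (fun _ => (1:ℤ))]
        exact if_congr (by constructor <;> intro <;> omega) rfl rfl
      rw [Finset.sum_congr rfl inner, Finset.sum_boole]
      have hfil : {j ∈ Finset.Icc (1:ℤ) (m:ℤ) | i + j - k ∈ Finset.Icc (1:ℤ) (m:ℤ)}
          = Finset.Icc (max 1 (k+1-i)) (min (m:ℤ) ((m:ℤ)+k-i)) := by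
        ext x
        simp only [Finset.mem_filter, Finset.mem_Icc, le_min_iff, max_le_iff]
        omega
      rw [hfil, Int.card_Icc]
      simp only [Finset.mem_Icc] at hi
      rcases le_total i k with h'|h'
      · rw [abs_of_nonpos (by omega)]; omega
      · rw [abs_of_nonneg (by omega)]; omega
    rw [Finset.sum_congr rfl step1]
    have himg : Finset.Icc (1:ℤ) (n:ℤ)
        = Finset.map (addLeftEmbedding k) (Finset.Icc (-(k0:ℤ)) (k0:ℤ)) := by
      rw [Finset.map_add_left_Icc]
      congr 1 <;> omega
    rw [himg, Finset.sum_map]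
    have : ∀ x ∈ Finset.Icc (-(k0:ℤ)) (k0:ℤ),
        (m:ℤ) - |addLeftEmbedding k x - k| = (m:ℤ) - |x| := by
      intro x _
      congr 1
      simp [addLeftEmbedding]
    rw [Finset.sum_congr rfl this, symm_sum]
    rw [hn', hkdef]
    ring
  have hq : ((((Finset.Icc (1:ℤ) n) ×ˢ (Finset.Icc (1:ℤ) m) ×ˢ (Finset.Icc (1:ℤ) m)).filter
        (fun t => (-(m : ℤ) + 2 * t.2.2 - 1) - (-(n : ℤ) + 2 * t.1 - 1)
            - (-(m : ℤ) + 2 * t.2.1 - 1) = 0)).card : ℚ)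
      = (n:ℚ)*m - k*(k-1) := by exact_mod_cast hmain
  rw [hq]
  simp only [hk, hkdef]
  push_cast
  field_simp
  ring
end

section
/- Let n, m ≥ 1 with n even and n < 2m + 1. The number of triples (i,j,s) with 1 ≤ i ≤ n, 1 ≤ j ≤ m, 1 ≤ s ≤ m such that (-m + 2s - 1) - (-n + 2i - 1) - (-m + 2j - 1) = 1 equals (4nm - n²)/4. -/
open Finset

/-- For `n` even, `n < 2m+1`: the number of triples `(i,j,s)` with `1 ≤ i ≤ n`,
`1 ≤ j,s ≤ m` and `(-m+2s-1) - (-n+2i-1) - (-m+2j-1) = 1` equals `(4nm - n²)/4`. -/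
theorem stmt7 (n m : ℕ) (hn : 1 ≤ n) (hm : 1 ≤ m) (hev : Even n) (h : n < 2 * m + 1) :
    ((((Finset.Icc (1:ℤ) n) ×ˢ (Finset.Icc (1:ℤ) m) ×ˢ (Finset.Icc (1:ℤ) m)).filter
        (fun t => (-(m : ℤ) + 2 * t.2.2 - 1) - (-(n : ℤ) + 2 * t.1 - 1)
            - (-(m : ℤ) + 2 * t.2.1 - 1) = 1)).card : ℚ)
      = (4 * n * m - n ^ 2) / 4 := by
  classical
  obtain ⟨k, hk⟩ := hev
  have hkm : k ≤ m := by omega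
  have hk1 : 1 ≤ k := by omega
  set K : ℤ := (k : ℤ) with hKdef
  set M : ℤ := (m : ℤ) with hMdef
  have hn2 : (n : ℤ) = 2 * K := by rw [hKdef]; push_cast [hk]; ring
  have hKM : K ≤ M := by rw [hKdef, hMdef]; exact_mod_cast hkm
  have hK1 : (1:ℤ) ≤ K := by rw [hKdef]; exact_mod_cast hk1
  set R : Finset (ℤ × ℤ) := Icc (1:ℤ) (n : ℤ) ×ˢ Icc (1:ℤ) M with hR
  set P : ℤ × ℤ → Prop := fun p => K + 1 ≤ p.1 + p.2 ∧ p.1 + p.2 ≤ M + K with hP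
  -- Step 1: triples ↔ pairs
  have hT : (((Finset.Icc (1:ℤ) n) ×ˢ (Finset.Icc (1:ℤ) m) ×ˢ (Finset.Icc (1:ℤ) m)).filter
        (fun t => (-(m : ℤ) + 2 * t.2.2 - 1) - (-(n : ℤ) + 2 * t.1 - 1)
            - (-(m : ℤ) + 2 * t.2.1 - 1) = 1)).card = (R.filter P).card := by
    apply Finset.card_bij' (fun t _ => (t.1, t.2.1))
      (fun p _ => (p.1, p.2, p.1 + p.2 - K))
    · rintro ⟨i, j, s⟩ ht
      simp only [hR, hP, mem_filter, mem_product, mem_Icc] at ht ⊢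
      omega
    · rintro ⟨i, j⟩ hp
      simp only [hR, hP, mem_filter, mem_product, mem_Icc] at hp ⊢
      omega
    · rintro ⟨i, j, s⟩ ht
      simp only [mem_filter, mem_product, mem_Icc] at ht
      have : s = i + j - K := by omega
      simp [this]
    · rintro ⟨i, j⟩ hp
      rfl
  -- Step 2: complement bijects with k×k square
  have hC : (R.filter (fun p => ¬ P p)).card = (Icc (1:ℤ) K ×ˢ Icc (1:ℤ) K).card := by
    apply Finset.card_bij' (fun p _ => if p.1 + p.2 ≤ K then p else (p.1 - K, p.2 + K - M))
      (fun q _ => if q.1 + q.2 ≤ K then q else (q.1 + K, q.2 + M - K))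
    · rintro ⟨i, j⟩ hp
      simp only [hR, hP, mem_filter, mem_product, mem_Icc, not_and, not_le] at hp
      by_cases hc : i + j ≤ K <;>
        simp only [hc, if_true, if_false, mem_product, mem_Icc] <;> omega
    · rintro ⟨i, j⟩ hq
      simp only [hR, hP, mem_filter, mem_product, mem_Icc, not_and, not_le,
        mem_product] at hq ⊢
      by_cases hc : i + j ≤ K <;>
        simp only [hc, if_true, if_false] <;> omega
    · rintro ⟨i, j⟩ hp
      simp only [hR, hP, mem_filter, mem_product, mem_Icc, not_and, not_le] at hp
      by_cases hc : i + j ≤ K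
      · rw [if_pos hc, if_pos hc]
      · rw [if_neg hc, if_neg (by omega : ¬ ((i - K) + (j + K - M) ≤ K))]
        simp only [Prod.mk.injEq]
        constructor <;> ring
    · rintro ⟨i, j⟩ hq
      simp only [mem_product, mem_Icc] at hq
      by_cases hc : i + j ≤ K
      · rw [if_pos hc, if_pos hc]
      · rw [if_neg hc, if_neg (by omega : ¬ ((i + K) + (j + M - K) ≤ K))]
        simp only [Prod.mk.injEq]
        constructor <;> ring
  -- Step 3: cardinalities
  have hRcard : R.card = 2 * k * m := by
    simp only [hR, Finset.card_product, Int.card_Icc]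
    rw [show ((n:ℤ) + 1 - 1).toNat = n by omega, show (M + 1 - 1).toNat = m by
      rw [hMdef]; omega, hk]
    ring
  have hsq : (Icc (1:ℤ) K ×ˢ Icc (1:ℤ) K).card = k * k := by
    simp only [Finset.card_product, Int.card_Icc]
    rw [show (K + 1 - 1).toNat = k by rw [hKdef]; omega]
  have hsplit := Finset.card_filter_add_card_filter_not (s := R) (p := P)
  have hScard : (R.filter P).card = 2 * k * m - k * k := by omega
  rw [hT, hScard]
  have hle : k * k ≤ 2 * k * m := by nlinarith
  rw [hk]
  push_cast [Nat.cast_sub hle]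
  field_simp
  ring
end

section
/- For the model Z₃-filiform Lie algebra L = L^{n,m,p}, a bilinear map ψ ∈ Hom(L₀ ∧ L₀, L₀) vanishing on X₀ (i.e. ψ(X₀,·)=0) and with X₀ ∉ Im ψ satisfies the 2-cocycle condition [Xᵢ,ψ(X_j,X_k)] - [X_j,ψ(Xᵢ,X_k)] + [X_k,ψ(Xᵢ,X_j)] - ψ([Xᵢ,X_j],X_k) + ψ([Xᵢ,X_k],X_j) + ψ(Xᵢ,[X_j,X_k]) = 0 for all i,j,k if and only if [X₀, ψ(X_j, X_k)] - ψ([X₀,X_j], X_k) - ψ(X_j, [X₀,X_k]) = 0 for all 1 ≤ j < k ≤ n. -/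
/-- For the model algebra, a skew bilinear map `ψ` on `L₀` vanishing on `X₀` and with
image avoiding `X₀` (i.e. contained in `span{X₁,…,X_n}`) satisfies the full 2-cocycle
condition iff it satisfies the reduced condition involving only `X₀`. -/
theorem stmt14 (n : ℕ) (hn : 1 ≤ n)
    (L : Type) [LieRing L] [LieAlgebra ℂ L]
    (X : ℕ → L)
    (hXX : ∀ i, 1 ≤ i → i ≤ n - 1 → ⁅X 0, X i⁆ = X (i + 1))
    (hXn : ⁅X 0, X n⁆ = 0)
    (hXX0 : ∀ i j, 1 ≤ i → 1 ≤ j → ⁅X i, X j⁆ = 0)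
    (ψ : L →ₗ[ℂ] L →ₗ[ℂ] L)
    (hskew : ∀ x y : L, ψ x y = -ψ y x)
    (hψ0 : ∀ x : L, ψ (X 0) x = 0)
    (him : ∀ x y : L, ψ x y ∈ Submodule.span ℂ (X '' Set.Icc 1 n)) :
    (∀ i j k, i ≤ n → j ≤ n → k ≤ n →
        ⁅X i, ψ (X j) (X k)⁆ - ⁅X j, ψ (X i) (X k)⁆ + ⁅X k, ψ (X i) (X j)⁆
          - ψ ⁅X i, X j⁆ (X k) + ψ ⁅X i, X k⁆ (X j) + ψ (X i) ⁅X j, X k⁆ = 0) ↔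
      (∀ j k, 1 ≤ j → j < k → k ≤ n →
        ⁅X 0, ψ (X j) (X k)⁆ - ψ ⁅X 0, X j⁆ (X k) - ψ (X j) ⁅X 0, X k⁆ = 0) := by
  -- ψ x x = 0
  have hdiag : ∀ x : L, ψ x x = 0 := by
    intro x
    have h := hskew x x
    have : (2 : ℂ) • ψ x x = 0 := by
      rw [two_smul]; nth_rewrite 2 [h]; abel
    have h2 : (2 : ℂ) ≠ 0 := by norm_num
    simpa [h2] using (smul_eq_zero.mp this)
  -- ψ x (X 0) = 0
  have hψ0' : ∀ x : L, ψ x (X 0) = 0 := by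
    intro x; rw [hskew]; rw [hψ0]; simp
  -- for i ≥ 1, ⁅X i, v⁆ = 0 for v in the span
  have hkill : ∀ i, 1 ≤ i → ∀ v ∈ Submodule.span ℂ (X '' Set.Icc 1 n), ⁅X i, v⁆ = 0 := by
    intro i hi v hv
    induction hv using Submodule.span_induction with
    | mem x hx =>
      obtain ⟨l, hl, rfl⟩ := hx
      exact hXX0 i l hi hl.1
    | zero => simp
    | add x y _ _ hx hy => rw [lie_add, hx, hy]; simp
    | smul c x _ hx => rw [lie_smul, hx]; simp
  have hkillψ : ∀ i, 1 ≤ i → ∀ x y : L, ⁅X i, ψ x y⁆ = 0 := fun i hi x y =>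
    hkill i hi _ (him x y)
  -- reduced expression
  set E : ℕ → ℕ → L := fun j k =>
    ⁅X 0, ψ (X j) (X k)⁆ - ψ ⁅X 0, X j⁆ (X k) - ψ (X j) ⁅X 0, X k⁆ with hE
  constructor
  · intro hfull j k hj hjk hk
    have h := hfull 0 j k (by omega) (by omega) hk
    rw [hψ0, hψ0, hψ0] at h
    rw [hskew ⁅X 0, X k⁆ (X j)] at h
    simp only [lie_zero, sub_zero, add_zero] at h
    have : ⁅X 0, ψ (X j) (X k)⁆ - ψ ⁅X 0, X j⁆ (X k) - ψ (X j) ⁅X 0, X k⁆ = 0 := by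
      rw [← h]; abel
    exact this
  · intro hred
    -- the reduced identity holds for all j k ≤ n
    have hredall : ∀ j k, j ≤ n → k ≤ n → E j k = 0 := by
      intro j k hjn hkn
      rcases Nat.eq_zero_or_pos j with hj0 | hj1
      · subst hj0
        simp only [hE, hψ0, lie_zero, lie_self, map_zero, LinearMap.zero_apply]
        abel
      rcases Nat.eq_zero_or_pos k with hk0 | hk1
      · subst hk0
        simp only [hE, hψ0', lie_zero, lie_self, map_zero, LinearMap.zero_apply]
        abel
      rcases lt_trichotomy j k with h | h | h
      · exact hred j k hj1 h hkn
      · subst h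
        simp only [hE, hdiag, lie_zero]
        rw [hskew ⁅X 0, X j⁆ (X j)]
        abel
      · have h' := hred k j hk1 h hjn
        simp only [hE]
        rw [hskew (X j) (X k), hskew ⁅X 0, X j⁆ (X k), hskew (X j) ⁅X 0, X k⁆]
        rw [lie_neg]
        have : -(⁅X 0, ψ (X k) (X j)⁆ - ψ ⁅X 0, X k⁆ (X j) - ψ (X k) ⁅X 0, X j⁆) = 0 := by
          rw [h']; abel
        rw [← this]; abel
    intro i j k hin hjn hkn
    rcases Nat.eq_zero_or_pos i with hi0 | hi1
    · subst hi0
      have := hredall j k hjn hkn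
      simp only [hE] at this
      rw [hψ0, hψ0, hψ0, hskew ⁅X 0, X k⁆ (X j)]
      rw [lie_zero, lie_zero]
      calc ⁅X 0, ψ (X j) (X k)⁆ - 0 + 0 - ψ ⁅X 0, X j⁆ (X k) + -ψ (X j) ⁅X 0, X k⁆ + 0
          = ⁅X 0, ψ (X j) (X k)⁆ - ψ ⁅X 0, X j⁆ (X k) - ψ (X j) ⁅X 0, X k⁆ := by abel
        _ = 0 := this
    rcases Nat.eq_zero_or_pos j with hj0 | hj1
    · subst hj0
      have := hredall i k hin hkn
      simp only [hE] at this
      rw [hψ0, hskew (X i) (X 0), hψ0]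
      have h4 : ψ ⁅X i, X 0⁆ (X k) = -ψ ⁅X 0, X i⁆ (X k) := by
        rw [(lie_skew (X 0) (X i)).symm, map_neg, LinearMap.neg_apply, neg_neg]
      have h5 : ψ ⁅X i, X k⁆ (X 0) = 0 := hψ0' _
      rw [h4, h5]
      simp only [neg_zero, lie_zero]
      calc (0 : L) - ⁅X 0, ψ (X i) (X k)⁆ + 0 - -ψ ⁅X 0, X i⁆ (X k) + 0 + ψ (X i) ⁅X 0, X k⁆
          = -(⁅X 0, ψ (X i) (X k)⁆ - ψ ⁅X 0, X i⁆ (X k) - ψ (X i) ⁅X 0, X k⁆) := by abel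
        _ = 0 := by rw [this]; simp
    rcases Nat.eq_zero_or_pos k with hk0 | hk1
    · subst hk0
      have := hredall i j hin hjn
      simp only [hE] at this
      rw [hskew (X j) (X 0), hψ0, hskew (X i) (X 0), hψ0]
      have h5 : ψ ⁅X i, X 0⁆ (X j) = -ψ ⁅X 0, X i⁆ (X j) := by
        rw [(lie_skew (X 0) (X i)).symm, map_neg, LinearMap.neg_apply, neg_neg]
      have h6 : ψ (X i) ⁅X j, X 0⁆ = -ψ (X i) ⁅X 0, X j⁆ := by
        rw [(lie_skew (X 0) (X j)).symm, map_neg, neg_neg]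
      have h4 : ψ ⁅X i, X j⁆ (X 0) = 0 := hψ0' _
      rw [h4, h5, h6]
      have h5' : ψ ⁅X 0, X i⁆ (X j) = -ψ (X j) ⁅X 0, X i⁆ := hskew _ _
      simp only [neg_zero, lie_zero]
      calc (0 : L) - 0 + ⁅X 0, ψ (X i) (X j)⁆ - 0 + -ψ ⁅X 0, X i⁆ (X j) + -ψ (X i) ⁅X 0, X j⁆
          = ⁅X 0, ψ (X i) (X j)⁆ - ψ ⁅X 0, X i⁆ (X j) - ψ (X i) ⁅X 0, X j⁆ := by abel
        _ = 0 := this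
    · -- all ≥ 1
      rw [hkillψ i hi1, hkillψ j hj1, hkillψ k hk1,
        hXX0 i j hi1 hj1, hXX0 i k hi1 hk1, hXX0 j k hj1 hk1]
      simp
end

section
/- Let n be odd, n ≡ 1 (mod 4). The number of triples (i,j,s) of integers with 1 ≤ i < j ≤ n, 1 ≤ s ≤ n and 2(i + j - s) = n + 1 equals (3n² - 4n + 1)/8 + (n-1)/4. -/
private noncomputable def innerS (K i : ℤ) : Finset ℤ :=
  (Finset.Icc (1:ℤ) (4*K+1)).filter
    (fun j => i < j ∧ 1 ≤ i + j - (2*K+1) ∧ i + j - (2*K+1) ≤ 4*K+1)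

private lemma innerS_card (K i : ℤ) (hi : 1 ≤ i) :
    ((innerS K i).card : ℤ)
      = max 0 (min (4*K+1) (6*K+2-i) + 1 - max (i+1) (2*K+2-i)) := by
  have h : innerS K i
      = Finset.Icc (max (i+1) (2*K+2-i)) (min (4*K+1) (6*K+2-i)) := by
    ext j
    simp only [innerS, Finset.mem_filter, Finset.mem_Icc]
    omega
  rw [h, Int.card_Icc]
  omega

private lemma sumAffine (a b : ℤ) (N : ℕ) :
    2 * ∑ j ∈ Finset.range N, (a + b * (j:ℤ)) = N * (2*a + b*(N-1)) := by
  induction N with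
  | zero => simp
  | succ N ih =>
      rw [Finset.sum_range_succ, mul_add, ih]
      push_cast
      ring

private lemma main_count (k : ℕ) :
    2 * (∑ j ∈ Finset.range (4*k+1), ((innerS (k:ℤ) ((j:ℤ)+1)).card : ℤ))
      = 12*(k:ℤ)^2 + 4*(k:ℤ) := by
  set K : ℤ := (k:ℤ) with hK
  have h4k : 4*k+1 = k + ((k+1) + (k + k)) := by ring
  rw [h4k, Finset.sum_range_add _ k ((k+1) + (k+k)),
    Finset.sum_range_add _ (k+1) (k+k), Finset.sum_range_add _ k k]
  have p1 : ∑ j ∈ Finset.range k, ((innerS K ((j:ℤ)+1)).card : ℤ)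
      = ∑ j ∈ Finset.range k, (2*K+1 + 1 * (j:ℤ)) := by
    refine Finset.sum_congr rfl (fun j hj => ?_)
    have hj' := Finset.mem_range.mp hj
    rw [innerS_card K ((j:ℤ)+1) (by omega)]
    omega
  have p2 : ∑ x ∈ Finset.range (k+1), ((innerS K ((↑(k + x):ℤ)+1)).card : ℤ)
      = ∑ x ∈ Finset.range (k+1), (3*K + (-1) * (x:ℤ)) := by
    refine Finset.sum_congr rfl (fun x hx => ?_)
    have hx' := Finset.mem_range.mp hx
    rw [innerS_card K ((↑(k + x):ℤ)+1) (by push_cast; omega)]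
    push_cast
    omega
  have p3 : ∑ x ∈ Finset.range k, ((innerS K ((↑(k + (k + 1 + x)):ℤ)+1)).card : ℤ)
      = ∑ x ∈ Finset.range k, (2*K-2 + (-2) * (x:ℤ)) := by
    refine Finset.sum_congr rfl (fun x hx => ?_)
    have hx' := Finset.mem_range.mp hx
    rw [innerS_card K ((↑(k + (k + 1 + x)):ℤ)+1) (by push_cast; omega)]
    push_cast
    omega
  have p4 : ∑ x ∈ Finset.range k, ((innerS K ((↑(k + (k + 1 + (k + x))):ℤ)+1)).card : ℤ)
      = 0 := by
    refine Finset.sum_eq_zero (fun x hx => ?_)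
    have hx' := Finset.mem_range.mp hx
    have := innerS_card K ((↑(k + (k + 1 + (k + x))):ℤ)+1) (by push_cast; omega)
    push_cast at this ⊢
    omega
  rw [p1, p2, p3, p4]
  have e1 := sumAffine (2*K+1) 1 k
  have e2 := sumAffine (3*K) (-1) (k+1)
  have e3 := sumAffine (2*K-2) (-2) k
  push_cast at e1 e2 e3
  rw [show ((k:ℤ)) = K from rfl] at e1 e2 e3
  linarith

/-- For `n ≡ 1 (mod 4)`: the number of triples `(i,j,s)` with `1 ≤ i < j ≤ n`,
`1 ≤ s ≤ n`, `2(i+j-s) = n+1` equals `(3n²-4n+1)/8 + (n-1)/4`. -/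
theorem stmt15 (n : ℕ) (hn : 1 ≤ n) (hodd : Odd n) (h4 : n % 4 = 1) :
    ((((Finset.Icc (1:ℤ) n) ×ˢ (Finset.Icc (1:ℤ) n) ×ˢ (Finset.Icc (1:ℤ) n)).filter
        (fun t => t.1 < t.2.1 ∧ 2 * (t.1 + t.2.1 - t.2.2) = (n : ℤ) + 1)).card : ℚ)
      = (3 * n ^ 2 - 4 * n + 1) / 8 + ((n : ℚ) - 1) / 4 := by
  obtain ⟨k, hk⟩ : ∃ k, n = 4*k+1 := ⟨n/4, by omega⟩
  set K : ℤ := (k:ℤ) with hKdef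
  have hn' : (n:ℤ) = 4*K+1 := by rw [hk]; push_cast; ring
  set T := (((Finset.Icc (1:ℤ) n) ×ˢ (Finset.Icc (1:ℤ) n) ×ˢ (Finset.Icc (1:ℤ) n)).filter
        (fun t => t.1 < t.2.1 ∧ 2 * (t.1 + t.2.1 - t.2.2) = (n : ℤ) + 1)) with hT
  have hfib : T.card = ∑ i ∈ Finset.Icc (1:ℤ) (4*K+1), (T.filter (fun t => t.1 = i)).card := by
    refine Finset.card_eq_sum_card_fiberwise (fun t ht => ?_)
    simp only [hT, Finset.mem_coe, Finset.mem_filter, Finset.mem_product, Finset.mem_Icc] at ht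
    rw [Finset.mem_coe, Finset.mem_Icc]
    omega
  have hfibval : ∀ i ∈ Finset.Icc (1:ℤ) (4*K+1),
      (T.filter (fun t => t.1 = i)).card = (innerS K i).card := by
    intro i hi
    rw [Finset.mem_Icc] at hi
    refine Finset.card_bij' (fun t _ => t.2.1) (fun j _ => (i, j, i + j - (2*K+1)))
      ?_ ?_ ?_ ?_
    · rintro ⟨a, b, s⟩ ht
      simp only [hT, Finset.mem_filter, Finset.mem_product, Finset.mem_Icc] at ht
      simp only [innerS, Finset.mem_filter, Finset.mem_Icc]
      omega
    · intro j hj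
      simp only [innerS, Finset.mem_filter, Finset.mem_Icc] at hj
      simp only [hT, Finset.mem_filter, Finset.mem_product, Finset.mem_Icc, and_true, true_and]
      omega
    · rintro ⟨a, b, s⟩ ht
      simp only [hT, Finset.mem_filter, Finset.mem_product, Finset.mem_Icc] at ht
      simp only [Prod.mk.injEq, and_true, true_and]
      omega
    · intro j hj
      rfl
  have hmap : Finset.Icc (1:ℤ) (4*K+1)
      = (Finset.range n).map ⟨fun j : ℕ => (j:ℤ)+1, by have hinj : Function.Injective (fun j : ℕ => (j:ℤ)+1) := (fun a b h => by simpa using h); exact hinj⟩ := by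
    ext x
    simp only [Finset.mem_Icc, Finset.mem_map, Finset.mem_range, Function.Embedding.coeFn_mk]
    constructor
    · rintro ⟨h1, h2⟩
      exact ⟨(x-1).toNat, by omega, by omega⟩
    · rintro ⟨j, hj, rfl⟩
      omega
  have hZ : (∑ j ∈ Finset.range n, ((innerS K ((j:ℤ)+1)).card : ℤ)) = 6*K^2 + 2*K := by
    rw [hk]
    linarith [main_count k]
  calc ((T.card : ℕ) : ℚ)
      = ((∑ j ∈ Finset.range n, (innerS K ((j:ℤ)+1)).card : ℕ) : ℚ) := by
        rw [hfib, Finset.sum_congr rfl hfibval, hmap, Finset.sum_map]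
        simp only [Function.Embedding.coeFn_mk]
    _ = 6*(k:ℚ)^2 + 2*(k:ℚ) := by
        simp only [hKdef] at hZ ⊢
        exact_mod_cast hZ
    _ = (3 * n ^ 2 - 4 * n + 1) / 8 + ((n : ℚ) - 1) / 4 := by
        rw [hk]
        push_cast
        field_simp
        ring
end

section
/- Let n be odd, n ≡ 3 (mod 4). The number of triples (i,j,s) of integers with 1 ≤ i < j ≤ n, 1 ≤ s ≤ n and 2(i + j - s) = n + 1 equals (3n² - 4n + 1)/8 + (n+1)/4. -/
open Finset

private lemma sum_Ico_split (f : ℤ → ℤ) {a b c : ℤ} (hab : a ≤ b) (hbc : b ≤ c) :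
    ∑ i ∈ Finset.Ico a c, f i
      = ∑ i ∈ Finset.Ico a b, f i + ∑ i ∈ Finset.Ico b c, f i := by
  rw [← Finset.Ico_union_Ico_eq_Ico hab hbc,
    Finset.sum_union (Finset.Ico_disjoint_Ico_consecutive a b c)]

private lemma sum_Ico_int (a : ℤ) (m : ℕ) (f : ℤ → ℤ) :
    ∑ i ∈ Finset.Ico a (a + (m:ℤ)), f i = ∑ j ∈ Finset.range m, f (a + (j:ℤ)) := by
  induction m with
  | zero => simp
  | succ m ih =>
    have hm : a ≤ a + (m:ℤ) := by linarith [Int.natCast_nonneg m]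
    have h1 : a + ((m+1 : ℕ) : ℤ) = (a + (m:ℤ)) + 1 := by push_cast; ring
    have hsing : Finset.Ico (a+(m:ℤ)) (a+(m:ℤ)+1) = {a+(m:ℤ)} := by
      ext x; simp only [Finset.mem_Ico, Finset.mem_singleton]; omega
    rw [h1, sum_Ico_split f hm (by linarith), ih, hsing, Finset.sum_singleton,
      Finset.sum_range_succ]

private lemma sum_range_linear (m : ℕ) (c d : ℤ) :
    (∑ j ∈ Finset.range m, (c + d * (j:ℤ))) * 2 = m * (2*c + d*((m:ℤ)-1)) := by
  induction m with
  | zero => simp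
  | succ m ih =>
    rw [Finset.sum_range_succ, add_mul, ih]
    push_cast; ring

private lemma count_eval (N a b : ℤ) (ha : 1 ≤ a) (hb : b ≤ N) (hab : a ≤ b + 1)
    (P : ℤ → Prop) [DecidablePred P]
    (hP : ∀ j, 1 ≤ j → j ≤ N → (P j ↔ a ≤ j ∧ j ≤ b)) :
    ∑ j ∈ Finset.Icc (1:ℤ) N, (if P j then (1:ℤ) else 0) = b + 1 - a := by
  have h1 : ∀ j ∈ Finset.Icc (1:ℤ) N, (if P j then (1:ℤ) else 0)
      = (if a ≤ j ∧ j ≤ b then (1:ℤ) else 0) := by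
    intro j hj
    rw [Finset.mem_Icc] at hj
    exact if_congr (hP j hj.1 hj.2) rfl rfl
  rw [Finset.sum_congr rfl h1]
  have h2 : ∑ j ∈ Finset.Icc (1:ℤ) N, (if a ≤ j ∧ j ≤ b then (1:ℤ) else 0)
      = (((Finset.Icc (1:ℤ) N).filter (fun j => a ≤ j ∧ j ≤ b)).card : ℤ) := by
    rw [Finset.card_filter]; push_cast; rfl
  rw [h2]
  have hfe : (Finset.Icc (1:ℤ) N).filter (fun j => a ≤ j ∧ j ≤ b) = Finset.Icc a b := by
    ext j; simp only [Finset.mem_filter, Finset.mem_Icc]; omega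
  rw [hfe, Int.card_Icc, Int.toNat_of_nonneg (by omega)]

private lemma count_aux (k : ℕ) :
    (((Finset.Icc (1:ℤ) (4*(k:ℤ)+3)) ×ˢ (Finset.Icc (1:ℤ) (4*(k:ℤ)+3)) ×ˢ
        (Finset.Icc (1:ℤ) (4*(k:ℤ)+3))).filter
      (fun t => t.1 < t.2.1 ∧ 2 * (t.1 + t.2.1 - t.2.2) = 4*(k:ℤ)+3+1)).card
      = 6*k^2+8*k+3 := by
  have main : ((((Finset.Icc (1:ℤ) (4*(k:ℤ)+3)) ×ˢ (Finset.Icc (1:ℤ) (4*(k:ℤ)+3)) ×ˢ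
        (Finset.Icc (1:ℤ) (4*(k:ℤ)+3))).filter
      (fun t => t.1 < t.2.1 ∧ 2 * (t.1 + t.2.1 - t.2.2) = 4*(k:ℤ)+3+1)).card : ℤ)
      = 6*(k:ℤ)^2+8*(k:ℤ)+3 := by
    rw [Finset.card_filter]
    push_cast
    simp only [Finset.sum_product]
    have hinner : ∀ i j : ℤ, (∑ s ∈ Finset.Icc (1:ℤ) (4*(k:ℤ)+3),
        (if i < j ∧ 2 * (i + j - s) = 4*(k:ℤ)+3+1 then (1:ℤ) else 0))
        = (if i < j ∧ 1 ≤ i+j-(2*(k:ℤ)+2) ∧ i+j-(2*(k:ℤ)+2) ≤ 4*(k:ℤ)+3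
            then (1:ℤ) else 0) := by
      intro i j
      by_cases hij : i < j
      · simp only [hij, true_and]
        have hc : ∀ s : ℤ, (2 * (i + j - s) = 4*(k:ℤ)+3+1) ↔ s = i+j-(2*(k:ℤ)+2) := by
          intro s; omega
        simp only [hc]
        rw [Finset.sum_ite_eq' (Finset.Icc (1:ℤ) (4*(k:ℤ)+3)) (i+j-(2*(k:ℤ)+2))
          (fun _ => (1:ℤ))]
        simp only [Finset.mem_Icc]
      · simp [hij]
    simp only [hinner]
    set F : ℤ → ℤ := fun i => ∑ j ∈ Finset.Icc (1:ℤ) (4*(k:ℤ)+3),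
        (if i < j ∧ 1 ≤ i+j-(2*(k:ℤ)+2) ∧ i+j-(2*(k:ℤ)+2) ≤ 4*(k:ℤ)+3
          then (1:ℤ) else 0) with hF
    rw [show Finset.Icc (1:ℤ) (4*(k:ℤ)+3) = Finset.Ico (1:ℤ) (4*(k:ℤ)+4) from by
      ext x; simp only [Finset.mem_Icc, Finset.mem_Ico]; omega]
    rw [sum_Ico_split F (show (1:ℤ) ≤ (k:ℤ)+2 by omega)
      (show (k:ℤ)+2 ≤ 4*(k:ℤ)+4 by omega)]
    rw [sum_Ico_split F (show (k:ℤ)+2 ≤ 2*(k:ℤ)+3 by omega)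
      (show 2*(k:ℤ)+3 ≤ 4*(k:ℤ)+4 by omega)]
    rw [sum_Ico_split F (show 2*(k:ℤ)+3 ≤ 3*(k:ℤ)+3 by omega)
      (show 3*(k:ℤ)+3 ≤ 4*(k:ℤ)+4 by omega)]
    -- piece 1
    have e1 : ∀ i ∈ Finset.Ico (1:ℤ) ((k:ℤ)+2), F i = 2*(k:ℤ)+1+i := by
      intro i hi
      rw [Finset.mem_Ico] at hi
      have := count_eval (4*(k:ℤ)+3) (2*(k:ℤ)+3-i) (4*(k:ℤ)+3)
        (by omega) (by omega) (by omega)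
        (fun j => i < j ∧ 1 ≤ i+j-(2*(k:ℤ)+2) ∧ i+j-(2*(k:ℤ)+2) ≤ 4*(k:ℤ)+3)
        (fun j hj1 hj2 => by omega)
      exact this.trans (by ring)
    have e2 : ∀ i ∈ Finset.Ico ((k:ℤ)+2) (2*(k:ℤ)+3), F i = 4*(k:ℤ)+3-i := by
      intro i hi
      rw [Finset.mem_Ico] at hi
      have := count_eval (4*(k:ℤ)+3) (i+1) (4*(k:ℤ)+3)
        (by omega) (by omega) (by omega)
        (fun j => i < j ∧ 1 ≤ i+j-(2*(k:ℤ)+2) ∧ i+j-(2*(k:ℤ)+2) ≤ 4*(k:ℤ)+3)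
        (fun j hj1 hj2 => by omega)
      exact this.trans (by ring)
    have e3 : ∀ i ∈ Finset.Ico (2*(k:ℤ)+3) (3*(k:ℤ)+3), F i = 6*(k:ℤ)+5-2*i := by
      intro i hi
      rw [Finset.mem_Ico] at hi
      have := count_eval (4*(k:ℤ)+3) (i+1) (6*(k:ℤ)+5-i)
        (by omega) (by omega) (by omega)
        (fun j => i < j ∧ 1 ≤ i+j-(2*(k:ℤ)+2) ∧ i+j-(2*(k:ℤ)+2) ≤ 4*(k:ℤ)+3)
        (fun j hj1 hj2 => by omega)
      exact this.trans (by ring)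
    have e4 : ∑ i ∈ Finset.Ico (3*(k:ℤ)+3) (4*(k:ℤ)+4), F i = 0 := by
      apply Finset.sum_eq_zero
      intro i hi
      rw [Finset.mem_Ico] at hi
      rw [hF]
      apply Finset.sum_eq_zero
      intro j hj
      rw [Finset.mem_Icc] at hj
      rw [if_neg (by omega)]
    rw [Finset.sum_congr rfl e1, Finset.sum_congr rfl e2, Finset.sum_congr rfl e3, e4]
    -- now reindex each explicit sum
    have r1 : (∑ i ∈ Finset.Ico (1:ℤ) ((k:ℤ)+2), (2*(k:ℤ)+1+i)) * 2
        = (k+1 : ℕ) * (2*(2*(k:ℤ)+2) + 1*(((k+1:ℕ):ℤ)-1)) := by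
      rw [show ((k:ℤ)+2) = 1 + ((k+1:ℕ):ℤ) from by push_cast; ring,
        sum_Ico_int 1 (k+1) (fun i => 2*(k:ℤ)+1+i)]
      have hc : (∑ j ∈ Finset.range (k+1), (2*(k:ℤ)+1+(1+(j:ℤ))))
          = ∑ j ∈ Finset.range (k+1), ((2*(k:ℤ)+2) + 1*(j:ℤ)) :=
        Finset.sum_congr rfl fun j _ => by ring
      rw [hc]
      exact sum_range_linear (k+1) (2*(k:ℤ)+2) 1
    have r2 : (∑ i ∈ Finset.Ico ((k:ℤ)+2) (2*(k:ℤ)+3), (4*(k:ℤ)+3-i)) * 2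
        = (k+1 : ℕ) * (2*(3*(k:ℤ)+1) + (-1)*(((k+1:ℕ):ℤ)-1)) := by
      rw [show (2*(k:ℤ)+3) = ((k:ℤ)+2) + ((k+1:ℕ):ℤ) from by push_cast; ring,
        sum_Ico_int ((k:ℤ)+2) (k+1) (fun i => 4*(k:ℤ)+3-i)]
      have hc : (∑ j ∈ Finset.range (k+1), (4*(k:ℤ)+3-(((k:ℤ)+2)+(j:ℤ))))
          = ∑ j ∈ Finset.range (k+1), ((3*(k:ℤ)+1) + (-1)*(j:ℤ)) :=
        Finset.sum_congr rfl fun j _ => by ring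
      rw [hc]
      exact sum_range_linear (k+1) (3*(k:ℤ)+1) (-1)
    have r3 : (∑ i ∈ Finset.Ico (2*(k:ℤ)+3) (3*(k:ℤ)+3), (6*(k:ℤ)+5-2*i)) * 2
        = (k : ℕ) * (2*(2*(k:ℤ)-1) + (-2)*(((k:ℕ):ℤ)-1)) := by
      rw [show (3*(k:ℤ)+3) = (2*(k:ℤ)+3) + ((k:ℕ):ℤ) from by push_cast; ring,
        sum_Ico_int (2*(k:ℤ)+3) k (fun i => 6*(k:ℤ)+5-2*i)]
      have hc : (∑ j ∈ Finset.range k, (6*(k:ℤ)+5-2*((2*(k:ℤ)+3)+(j:ℤ))))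
          = ∑ j ∈ Finset.range k, ((2*(k:ℤ)-1) + (-2)*(j:ℤ)) :=
        Finset.sum_congr rfl fun j _ => by ring
      rw [hc]
      exact sum_range_linear k (2*(k:ℤ)-1) (-2)
    push_cast at r1 r2 r3
    have h2 : ((∑ i ∈ Finset.Ico (1:ℤ) ((k:ℤ)+2), (2*(k:ℤ)+1+i))
        + ((∑ i ∈ Finset.Ico ((k:ℤ)+2) (2*(k:ℤ)+3), (4*(k:ℤ)+3-i))
        + ((∑ i ∈ Finset.Ico (2*(k:ℤ)+3) (3*(k:ℤ)+3), (6*(k:ℤ)+5-2*i)) + 0))) * 2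
        = (6*(k:ℤ)^2+8*(k:ℤ)+3) * 2 := by
      linear_combination r1 + r2 + r3
    exact mul_right_cancel₀ two_ne_zero h2
  exact_mod_cast main

/-- For `n ≡ 3 (mod 4)`: the number of triples `(i,j,s)` with `1 ≤ i < j ≤ n`,
`1 ≤ s ≤ n`, `2(i+j-s) = n+1` equals `(3n²-4n+1)/8 + (n+1)/4`. -/
theorem stmt16 (n : ℕ) (hn : 1 ≤ n) (hodd : Odd n) (h4 : n % 4 = 3) :
    ((((Finset.Icc (1:ℤ) n) ×ˢ (Finset.Icc (1:ℤ) n) ×ˢ (Finset.Icc (1:ℤ) n)).filter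
        (fun t => t.1 < t.2.1 ∧ 2 * (t.1 + t.2.1 - t.2.2) = (n : ℤ) + 1)).card : ℚ)
      = (3 * n ^ 2 - 4 * n + 1) / 8 + ((n : ℚ) + 1) / 4 := by
  obtain ⟨k, rfl⟩ : ∃ k, n = 4*k+3 := ⟨n/4, by omega⟩
  have hN : ((4*k+3 : ℕ) : ℤ) = 4*(k:ℤ)+3 := by push_cast; ring
  simp only [hN]
  rw [count_aux k]
  push_cast
  field_simp
  ring
end
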